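/- Reduction of the integral equation to an ODE: let z : [0,T] → ℝ be continuous and suppose there is a constant c₀ with (γ/(2η)) ∫₀ᵀ z(s) e^{−ρ|t−s|} ds + z(t) = c₀ for all t ∈ [0,T]. Then z is twice continuously differentiable on [0,T] and satisfies z''(t) − ρ(ρ + γ/η) z(t) = −ρ² c₀ for all t ∈ [0,T]. -/

import Mathlib

open Set

/-- Reduction of the integral equation to an ODE: if a continuous `z : [0,T] → ℝ` satisfies
`(γ/(2η)) ∫₀ᵀ z(s) e^{-ρ|t-s|} ds + z(t) = c₀` on `[0,T]`, then `z` is twice continuously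
differentiable on `[0,T]` and `z''(t) - ρ(ρ + γ/η) z(t) = -ρ² c₀` there. -/
theorem stmt_13 (T η γ ρ : ℝ) (hT : 0 < T) (hη : 0 < η) (hγ : 0 < γ) (hρ : 0 < ρ)
    (z : ℝ → ℝ) (hz : ContinuousOn z (Icc 0 T)) (c₀ : ℝ)
    (heq : ∀ t ∈ Icc (0:ℝ) T,
      γ / (2 * η) * (∫ s in (0:ℝ)..T, z s * Real.exp (-ρ * |t - s|)) + z t = c₀) :
    ∃ z' z'' : ℝ → ℝ,
      (∀ t ∈ Icc (0:ℝ) T, HasDerivWithinAt z (z' t) (Icc 0 T) t) ∧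
      (∀ t ∈ Icc (0:ℝ) T, HasDerivWithinAt z' (z'' t) (Icc 0 T) t) ∧
      ContinuousOn z' (Icc 0 T) ∧ ContinuousOn z'' (Icc 0 T) ∧
      (∀ t ∈ Icc (0:ℝ) T, z'' t - ρ * (ρ + γ / η) * z t = -(ρ ^ 2) * c₀) := by
  set k : ℝ := γ / (2 * η) with hk
  -- continuous extension of z to ℝ
  set w : ℝ → ℝ := fun s => z ((projIcc 0 T hT.le s : ℝ)) with hw
  have hwz : ∀ s ∈ Icc (0:ℝ) T, w s = z s := by
    intro s hs
    simp [hw, projIcc_of_mem hT.le hs]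
  have hwcont : Continuous w := by
    have : Continuous ((Icc (0:ℝ) T).restrict z) := hz.restrict
    exact this.comp continuous_projIcc
  -- integrands
  have hg1 : Continuous (fun s : ℝ => w s * Real.exp (ρ * s)) :=
    hwcont.mul (Real.continuous_exp.comp (continuous_const.mul continuous_id))
  have hg2 : Continuous (fun s : ℝ => w s * Real.exp (-ρ * s)) :=
    hwcont.mul (Real.continuous_exp.comp (continuous_const.mul continuous_id))
  set A : ℝ → ℝ := fun t => ∫ s in (0:ℝ)..t, w s * Real.exp (ρ * s) with hA
  set B : ℝ → ℝ := fun t => ∫ s in t..T, w s * Real.exp (-ρ * s) with hB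
  have hA' : ∀ t : ℝ, HasDerivAt A (w t * Real.exp (ρ * t)) t := fun t =>
    (hg1.integral_hasStrictDerivAt 0 t).hasDerivAt
  have hB' : ∀ t : ℝ, HasDerivAt B (-(w t * Real.exp (-ρ * t))) t := fun t =>
    (intervalIntegral.integral_hasStrictDerivAt_left (hg2.intervalIntegrable t T)
      (hg2.stronglyMeasurableAtFilter _ _) hg2.continuousAt).hasDerivAt
  have e1 : ∀ t : ℝ, HasDerivAt (fun t : ℝ => Real.exp (-ρ * t)) (-ρ * Real.exp (-ρ * t)) t := by
    intro t
    simpa [mul_comm] using ((hasDerivAt_id t).const_mul (-ρ)).exp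
  have e2 : ∀ t : ℝ, HasDerivAt (fun t : ℝ => Real.exp (ρ * t)) (ρ * Real.exp (ρ * t)) t := by
    intro t
    simpa [mul_comm] using ((hasDerivAt_id t).const_mul ρ).exp
  have hkey : ∀ t : ℝ, Real.exp (-ρ * t) * Real.exp (ρ * t) = 1 := by
    intro t
    rw [← Real.exp_add]
    ring_nf
    exact Real.exp_zero
  set F : ℝ → ℝ := fun t => Real.exp (-ρ * t) * A t + Real.exp (ρ * t) * B t with hF
  set F' : ℝ → ℝ := fun t => -ρ * Real.exp (-ρ * t) * A t + ρ * Real.exp (ρ * t) * B t with hF'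
  set F'' : ℝ → ℝ := fun t => ρ^2 * F t - 2 * ρ * w t with hF''
  have hFd : ∀ t : ℝ, HasDerivAt F (F' t) t := by
    intro t
    have h := ((e1 t).mul (hA' t)).add ((e2 t).mul (hB' t))
    refine h.congr_deriv ?_
    simp only [hF']
    ring
  have hFd' : ∀ t : ℝ, HasDerivAt F' (F'' t) t := by
    intro t
    have h := (((e1 t).const_mul (-ρ)).mul (hA' t)).add (((e2 t).const_mul ρ).mul (hB' t))
    refine h.congr_deriv ?_
    simp only [hF'', hF]
    linear_combination (-(2 * ρ * w t)) * hkey t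
  have hAc : Continuous A := by
    have : Differentiable ℝ A := fun t => (hA' t).differentiableAt
    exact this.continuous
  have hBc : Continuous B := by
    have : Differentiable ℝ B := fun t => (hB' t).differentiableAt
    exact this.continuous
  have hexp1 : Continuous (fun t : ℝ => Real.exp (-ρ * t)) :=
    Real.continuous_exp.comp (continuous_const.mul continuous_id)
  have hexp2 : Continuous (fun t : ℝ => Real.exp (ρ * t)) :=
    Real.continuous_exp.comp (continuous_const.mul continuous_id)
  have hFc : Continuous F := by
    simp only [hF]; fun_prop
  have hFc' : Continuous F' := by
    simp only [hF']
    exact ((continuous_const.mul hexp1).mul hAc).add ((continuous_const.mul hexp2).mul hBc)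
  have hFc'' : Continuous F'' := by
    simp only [hF'']
    exact (continuous_const.mul hFc).sub (continuous_const.mul hwcont)
  -- key identity: the integral equals F t on Icc 0 T
  have hid : ∀ t ∈ Icc (0:ℝ) T, (∫ s in (0:ℝ)..T, z s * Real.exp (-ρ * |t - s|)) = F t := by
    intro t ht
    obtain ⟨ht0, htT⟩ := ht
    have hsub1 : uIcc (0:ℝ) t ⊆ Icc 0 T := by
      rw [uIcc_of_le ht0]; exact Icc_subset_Icc le_rfl htT
    have hsub2 : uIcc t T ⊆ Icc 0 T := by
      rw [uIcc_of_le htT]; exact Icc_subset_Icc ht0 le_rfl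
    have hcont : ContinuousOn (fun s => z s * Real.exp (-ρ * |t - s|)) (Icc 0 T) :=
      hz.mul (Continuous.continuousOn (by fun_prop))
    have hi1 : IntervalIntegrable (fun s => z s * Real.exp (-ρ * |t - s|)) MeasureTheory.volume 0 t :=
      (hcont.mono hsub1).intervalIntegrable
    have hi2 : IntervalIntegrable (fun s => z s * Real.exp (-ρ * |t - s|)) MeasureTheory.volume t T :=
      (hcont.mono hsub2).intervalIntegrable
    rw [← intervalIntegral.integral_add_adjacent_intervals hi1 hi2]
    have part1 : (∫ s in (0:ℝ)..t, z s * Real.exp (-ρ * |t - s|))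
        = Real.exp (-ρ * t) * A t := by
      rw [hA]
      rw [← intervalIntegral.integral_const_mul]
      apply intervalIntegral.integral_congr
      intro s hs
      have hs' : s ∈ Icc 0 T := hsub1 hs
      have hst : s ≤ t := by
        rw [uIcc_of_le ht0] at hs; exact hs.2
      beta_reduce
      rw [hwz s hs', abs_of_nonneg (by linarith)]
      rw [show (-ρ * (t - s)) = -ρ * t + ρ * s by ring, Real.exp_add]
      ring
    have part2 : (∫ s in t..T, z s * Real.exp (-ρ * |t - s|))
        = Real.exp (ρ * t) * B t := by
      rw [hB]
      rw [← intervalIntegral.integral_const_mul]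
      apply intervalIntegral.integral_congr
      intro s hs
      have hs' : s ∈ Icc 0 T := hsub2 hs
      have hst : t ≤ s := by
        rw [uIcc_of_le htT] at hs; exact hs.1
      beta_reduce
      rw [hwz s hs', abs_of_nonpos (by linarith)]
      rw [show (-ρ * -(t - s)) = ρ * t + -ρ * s by ring, Real.exp_add]
      ring
    rw [part1, part2, hF]
  have hzF : ∀ t ∈ Icc (0:ℝ) T, z t = c₀ - k * F t := by
    intro t ht
    have := heq t ht
    rw [hid t ht] at this
    linarith
  refine ⟨fun t => -k * F' t, fun t => -k * F'' t, ?_, ?_, ?_, ?_, ?_⟩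
  · intro t ht
    have h : HasDerivWithinAt (fun t => c₀ - k * F t) (-k * F' t) (Icc 0 T) t := by
      have := ((hFd t).const_mul k).const_sub c₀
      refine this.hasDerivWithinAt.congr_deriv ?_
      ring
    exact h.congr (fun y hy => hzF y hy) (hzF t ht)
  · intro t ht
    exact (((hFd' t).const_mul (-k))).hasDerivWithinAt
  · exact (continuous_const.mul hFc').continuousOn
  · exact (continuous_const.mul hFc'').continuousOn
  · intro t ht
    have h1 : k * F t = c₀ - z t := by
      have := hzF t ht; linarith
    have h2 : w t = z t := hwz t ht
    simp only [hF'', h2]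
    have hη' : η ≠ 0 := hη.ne'
    have h3 : 2 * k = γ / η := by
      rw [hk]; field_simp
    linear_combination (-(ρ^2)) * h1 + (ρ * z t) * h3
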